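/- arXiv:1412.7066 — 4 statements merged into one kernel-verified Lean document; each statement's English description precedes it below -/
import Mathlib

section
/- Let 1 → A →ι B →π C → 1 be a short exact sequence of topological G-modules (ι a homeomorphic embedding onto ker π). Then the sequence of pointed sets 1 → H⁰(G,A) → H⁰(G,B) → H⁰(G,C) →δ⁰ H¹(G,A) → H¹(G,B) → H¹(G,C) is exact, where δ⁰(c) is the class of g ↦ b⁻¹(g·b) for any b with π(b) = c. -/
def IsContDeriv {G A : Type*} [Group G] [TopologicalSpace G] [Group A] [TopologicalSpace A]
    [MulDistribMulAction G A] (α : G → A) : Prop :=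
  Continuous α ∧ ∀ g h : G, α (g * h) = α g * g • α h

def Cohom {G A : Type*} [Group G] [Group A] [MulDistribMulAction G A] (α β : G → A) : Prop :=
  ∃ a : A, ∀ g : G, β g = a⁻¹ * α g * g • a

/-- The six-term exact sequence of pointed sets
`1 → H⁰(G,A) → H⁰(G,B) → H⁰(G,C) →δ⁰ H¹(G,A) → H¹(G,B) → H¹(G,C)`
attached to a short exact sequence `1 → A →ι B →π C → 1` of topological `G`-modules,
where `ι` is a homeomorphic embedding onto `ker π`.  The five conjuncts express
exactness at `H⁰(G,A)`, `H⁰(G,B)`, `H⁰(G,C)`, `H¹(G,A)` and `H¹(G,B)` respectively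
(derivations with values in `A` are expressed through their images under `ι`). -/
theorem six_term_exact_sequence {G A B C : Type*}
    [Group G] [TopologicalSpace G] [IsTopologicalGroup G]
    [Group A] [TopologicalSpace A] [IsTopologicalGroup A] [MulDistribMulAction G A]
    [ContinuousSMul G A]
    [Group B] [TopologicalSpace B] [IsTopologicalGroup B] [MulDistribMulAction G B]
    [ContinuousSMul G B]
    [Group C] [TopologicalSpace C] [IsTopologicalGroup C] [MulDistribMulAction G C]
    [ContinuousSMul G C]
    (ι : A →* B) (hιc : Continuous ι) (hιemb : Topology.IsEmbedding ι)
    (hιeq : ∀ (g : G) (a : A), ι (g • a) = g • ι a)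
    (π : B →* C) (hπc : Continuous π) (hπeq : ∀ (g : G) (b : B), π (g • b) = g • π b)
    (hπsurj : Function.Surjective π)
    (hexact : ∀ b : B, π b = 1 ↔ b ∈ Set.range ι) :
    -- exactness at H⁰(G,A)
    (∀ a : A, (∀ g : G, g • a = a) → ι a = 1 → a = 1) ∧
    -- exactness at H⁰(G,B)
    (∀ b : B, (∀ g : G, g • b = b) →
      (π b = 1 ↔ ∃ a : A, (∀ g : G, g • a = a) ∧ ι a = b)) ∧
    -- exactness at H⁰(G,C): δ⁰(c) is trivial in H¹(G,A) iff c comes from H⁰(G,B)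
    (∀ c : C, (∀ g : G, g • c = c) → ∀ b : B, π b = c →
      ((∃ a : A, ∀ g : G, b⁻¹ * g • b = (ι a)⁻¹ * g • ι a) ↔
        ∃ b' : B, (∀ g : G, g • b' = b') ∧ π b' = c)) ∧
    -- exactness at H¹(G,A): ι∘α is trivial in H¹(G,B) iff α is in the image of δ⁰
    (∀ α : G → A, IsContDeriv α →
      ((∃ b : B, ∀ g : G, ι (α g) = b⁻¹ * g • b) ↔
        ∃ c : C, (∀ g : G, g • c = c) ∧ ∃ b : B, π b = c ∧
          ∃ a : A, ∀ g : G, ι (α g) = (ι a)⁻¹ * (b⁻¹ * g • b) * g • ι a)) ∧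
    -- exactness at H¹(G,B): π∘β is trivial in H¹(G,C) iff β comes from H¹(G,A)
    (∀ β : G → B, IsContDeriv β →
      ((∃ c : C, ∀ g : G, π (β g) = c⁻¹ * g • c) ↔
        ∃ α : G → A, IsContDeriv α ∧ Cohom (fun g => ι (α g)) β)) := by

  have hinj : Function.Injective ι := hιemb.injective
  have hπι : ∀ a : A, π (ι a) = 1 := fun a => (hexact (ι a)).mpr ⟨a, rfl⟩
  refine ⟨?_, ?_, ?_, ?_, ?_⟩
  · -- H⁰(G,A)
    intro a _ h
    exact hinj (h.trans (map_one ι).symm)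
  · -- H⁰(G,B)
    intro b hb
    constructor
    · intro h
      obtain ⟨a, ha⟩ := (hexact b).mp h
      refine ⟨a, fun g => hinj ?_, ha⟩
      rw [hιeq, ha, hb]
    · rintro ⟨a, _, rfl⟩
      exact hπι a
  · -- H⁰(G,C)
    intro c _ b hbc
    constructor
    · rintro ⟨a, ha⟩
      refine ⟨b * (ι a)⁻¹, fun g => ?_, ?_⟩
      · have := ha g
        have hgb : g • b = b * ((ι a)⁻¹ * g • ι a) := by
          rw [← this]; group
        rw [smul_mul', smul_inv', hgb]; group
      · rw [map_mul, map_inv, hπι, inv_one, mul_one, hbc]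
    · rintro ⟨b', hb', rfl⟩
      have h1 : π (b'⁻¹ * b) = 1 := by
        rw [map_mul, map_inv, hbc]; group
      obtain ⟨a, ha⟩ := (hexact _).mp h1
      refine ⟨a, fun g => ?_⟩
      rw [ha, smul_mul', smul_inv', hb']
      group
  · -- H¹(G,A)
    intro α hα
    constructor
    · rintro ⟨b, hb⟩
      refine ⟨π b, fun g => ?_, b, rfl, 1, fun g => ?_⟩
      · rw [← hπeq]
        have : g • b = b * ι (α g) := by rw [hb g]; group
        rw [this, map_mul, hπι, mul_one]
      · simp [hb g, smul_one]
    · rintro ⟨c, _, b, _, a, ha⟩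
      refine ⟨b * ι a, fun g => ?_⟩
      rw [ha g, smul_mul', mul_inv_rev, ← hιeq]
      group
  · -- H¹(G,B)
    intro β hβ
    constructor
    · rintro ⟨c, hc⟩
      obtain ⟨b, rfl⟩ := hπsurj c
      set β' : G → B := fun g => b * β g * (g • b)⁻¹ with hβ'def
      have hβ'π : ∀ g, π (β' g) = 1 := by
        intro g
        simp only [hβ'def, map_mul, map_inv, hπeq, hc g]
        group
      have hmem : ∀ g, β' g ∈ Set.range ι := fun g => (hexact _).mp (hβ'π g)
      choose α hαspec using hmem
      have hια : ∀ g, ι (α g) = β' g := hαspec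
      have hβ'cont : Continuous β' := by
        exact (continuous_const.mul hβ.1).mul ((continuous_id.smul continuous_const).inv)
      have hαcont : Continuous α := by
        rw [hιemb.continuous_iff]
        exact hβ'cont.congr fun g => (hια g).symm
      have hαderiv : ∀ g h : G, α (g * h) = α g * g • α h := by
        intro g h
        apply hinj
        rw [map_mul, hιeq, hια, hια, hια, hβ'def]
        simp only
        rw [hβ.2 g h, smul_mul', smul_mul', smul_inv', ← mul_smul]
        group
      refine ⟨α, ⟨hαcont, hαderiv⟩, b, fun g => ?_⟩
      show β g = b⁻¹ * ι (α g) * g • b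
      rw [hια g, hβ'def]
      simp only
      group
    · rintro ⟨α, _, bb, hbb⟩
      refine ⟨π bb, fun g => ?_⟩
      rw [hbb g, map_mul, map_mul, map_inv, hπι, mul_one, hπeq]
end

section
/- Exactness at H¹(G,B): for a short exact sequence 1 → A → B → C → 1 of topological G-modules with A identified with ker π ⊆ B, a continuous derivation β : G → B has π∘β cohomologous to the trivial derivation in H¹(G,C) if and only if β is cohomologous to a continuous derivation taking values in A. -/
/-- Exactness at `H¹(G,B)`: for a short exact sequence `1 → A → B →π C → 1` of
topological `G`-modules (`A = ker π`), a continuous derivation `β : G → B` has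
`π ∘ β` cohomologous to the trivial derivation in `H¹(G,C)` iff `β` is cohomologous
to a continuous derivation taking values in `A = ker π`. -/
theorem exact_at_H1B {G B C : Type*}
    [Group G] [TopologicalSpace G] [IsTopologicalGroup G]
    [Group B] [TopologicalSpace B] [IsTopologicalGroup B] [MulDistribMulAction G B]
    [ContinuousSMul G B]
    [Group C] [TopologicalSpace C] [IsTopologicalGroup C] [MulDistribMulAction G C]
    [ContinuousSMul G C]
    (π : B →* C) (hπc : Continuous π) (hπeq : ∀ (g : G) (b : B), π (g • b) = g • π b)
    (hπsurj : Function.Surjective π)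
    (β : G → B) (hβ : IsContDeriv β) :
    (∃ c : C, ∀ g : G, π (β g) = c⁻¹ * g • c) ↔
      ∃ β' : G → B, IsContDeriv β' ∧ (∀ g : G, π (β' g) = 1) ∧ Cohom β β' := by
  constructor
  · rintro ⟨c, hc⟩
    obtain ⟨b, hb⟩ := hπsurj c
    refine ⟨fun g => b * β g * g • b⁻¹, ⟨?_, ?_⟩, ?_, b⁻¹, fun g => by
      rw [inv_inv]⟩
    · exact (continuous_const.mul hβ.1).mul
        (continuous_id.smul continuous_const)
    · intro g h
      show b * β (g * h) * (g * h) • b⁻¹ = _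
      rw [hβ.2 g h]
      simp only [smul_mul', smul_inv', mul_smul]
      group
    · intro g
      simp only [map_mul, hπeq, hb, hc g, map_inv, smul_inv']
      group
  · rintro ⟨β', _, hker, a, ha⟩
    refine ⟨(π a)⁻¹, fun g => ?_⟩
    have := congrArg π (ha g)
    rw [hker g] at this
    simp only [map_mul, map_inv, hπeq] at this
    rw [inv_inv]
    have h2 : π (β g) = π a * (g • π a)⁻¹ := by
      calc π (β g) = π a * ((π a)⁻¹ * π (β g) * g • π a) * (g • π a)⁻¹ := by group
        _ = π a * 1 * (g • π a)⁻¹ := by rw [← this]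
        _ = π a * (g • π a)⁻¹ := by rw [mul_one]
    rw [h2, smul_inv']
end

section
/- Let 0 → A → B →π C → 1 be a central short exact sequence of topological G-modules (A ⊆ Z(B)) and let s : C → B be a continuous section of π. For a continuous derivation α : G → C, the map δ¹(α)(g,h) = s(α(g))·(g·s(α(h)))·s(α(gh))⁻¹ takes values in A and is a continuous 2-cocycle: (g·δ¹(α)(h,k))·δ¹(α)(g,hk) = δ¹(α)(gh,k)·δ¹(α)(g,h) for all g,h,k ∈ G. -/
/-- The connecting 2-cochain `δ¹(α)(g,h) = s(α g) * (g • s(α h)) * s(α (g*h))⁻¹`. -/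
def delta1 {G B C : Type*} [Group G] [Group B] [Group C] [MulDistribMulAction G B]
    (s : C → B) (α : G → C) : G → G → B :=
  fun g h => s (α g) * g • s (α h) * (s (α (g * h)))⁻¹

/-- For a central extension `0 → A → B →π C → 1` of topological `G`-modules with a
continuous section `s` of `π`, and a continuous derivation `α : G → C`, the map
`δ¹(α)` takes values in `A = ker π` and is a continuous 2-cocycle. -/
theorem delta_one_is_cocycle {G B C : Type*}
    [Group G] [TopologicalSpace G] [IsTopologicalGroup G]
    [Group B] [TopologicalSpace B] [IsTopologicalGroup B] [MulDistribMulAction G B]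
    [ContinuousSMul G B]
    [Group C] [TopologicalSpace C] [IsTopologicalGroup C] [MulDistribMulAction G C]
    [ContinuousSMul G C]
    (π : B →* C) (hπc : Continuous π) (hπeq : ∀ (g : G) (b : B), π (g • b) = g • π b)
    (hπsurj : Function.Surjective π)
    (hcentral : ∀ b : B, π b = 1 → ∀ x : B, b * x = x * b)
    (s : C → B) (hsc : Continuous s) (hs : ∀ c : C, π (s c) = c)
    (α : G → C) (hα : IsContDeriv α) :
    (∀ g h : G, π (delta1 s α g h) = 1) ∧
      Continuous (fun p : G × G => delta1 s α p.1 p.2) ∧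
      ∀ g h k : G,
        g • delta1 s α h k * delta1 s α g (h * k) =
          delta1 s α (g * h) k * delta1 s α g h := by
  obtain ⟨hαc, hαd⟩ := hα
  have hker : ∀ g h : G, π (delta1 s α g h) = 1 := by
    intro g h
    simp only [delta1, map_mul, map_inv, hπeq, hs, hαd g h]
    group
  have hcen : ∀ g h : G, ∀ x : B, delta1 s α g h * x = x * delta1 s α g h :=
    fun g h x => hcentral _ (hker g h) x
  have hcen' : ∀ (g h k : G) (x : B),
      (g • delta1 s α h k) * x = x * (g • delta1 s α h k) := by
    intro g h k x
    refine hcentral _ ?_ x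
    rw [hπeq, hker, smul_one]
  have key : ∀ g h : G, delta1 s α g h * s (α (g * h)) = s (α g) * g • s (α h) := by
    intro g h
    simp [delta1, mul_assoc]
  refine ⟨hker, ?_, ?_⟩
  · exact ((hsc.comp (hαc.comp continuous_fst)).mul
      (continuous_fst.smul (hsc.comp (hαc.comp continuous_snd)))).mul
      ((hsc.comp (hαc.comp (continuous_fst.mul continuous_snd))).inv)
  · intro g h k
    calc g • delta1 s α h k * delta1 s α g (h * k)
        = g • delta1 s α h k * (s (α g) * g • s (α (h * k)) * (s (α (g * (h * k))))⁻¹) := rfl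
      _ = s (α g) * (g • delta1 s α h k * g • s (α (h * k))) * (s (α (g * (h * k))))⁻¹ := by
          rw [← mul_assoc, ← mul_assoc, hcen' g h k (s (α g)), mul_assoc (s (α g))]
      _ = s (α g) * g • (delta1 s α h k * s (α (h * k))) * (s (α (g * (h * k))))⁻¹ := by
          rw [smul_mul']
      _ = s (α g) * g • (s (α h) * h • s (α k)) * (s (α (g * (h * k))))⁻¹ := by
          rw [key h k]
      _ = s (α g) * (g • s (α h) * (g * h) • s (α k)) * (s (α (g * h * k)))⁻¹ := by
          rw [smul_mul', smul_smul, mul_assoc g h k]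
      _ = delta1 s α g h * (s (α (g * h)) * (g * h) • s (α k) * (s (α (g * h * k)))⁻¹) := by
          rw [← mul_assoc (delta1 s α g h), ← mul_assoc (delta1 s α g h), key g h]
          simp only [mul_assoc]
      _ = delta1 s α g h * delta1 s α (g * h) k := rfl
      _ = delta1 s α (g * h) k * delta1 s α g h := hcen g h _
end

section
/- Let N be a normal subgroup of a topological group G and A a topological G-module. Then the sequence 1 → H¹(G/N, A^N) →Inf¹ H¹(G,A) →Res¹ H¹(N,A) is exact: Inf¹ is injective, and ker Res¹ = Im Inf¹. -/
/-- A derivation on `G ⧸ N` with values in the `N`-fixed points `A^N`, described through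
its lift: `ᾱ : G ⧸ N → A` is continuous, satisfies the derivation identity on cosets, and
takes values fixed by `N`. -/
def IsQuotDeriv {G A : Type*} [Group G] [TopologicalSpace G] [Group A] [TopologicalSpace A]
    [MulDistribMulAction G A] (N : Subgroup G) [N.Normal] (ᾱ : G ⧸ N → A) : Prop :=
  Continuous ᾱ ∧
    (∀ g h : G, ᾱ ((g * h : G) : G ⧸ N) = ᾱ ((g : G ⧸ N)) * g • ᾱ ((h : G ⧸ N))) ∧
    ∀ q : G ⧸ N, ∀ n ∈ N, n • ᾱ q = ᾱ q


theorem quot_deriv_one {G A : Type*} [Group G] [TopologicalSpace G] [Group A]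
    [TopologicalSpace A] [MulDistribMulAction G A] (N : Subgroup G) [N.Normal]
    {ᾱ : G ⧸ N → A} (h : IsQuotDeriv N ᾱ) : ᾱ ((1 : G) : G ⧸ N) = 1 := by
  have h1 := h.2.1 1 1
  simp only [one_mul, one_smul] at h1
  exact (left_eq_mul.mp h1)

/-- The inflation–restriction exact sequence
`1 → H¹(G/N, A^N) →Inf¹ H¹(G,A) →Res¹ H¹(N,A)`:
`Inf¹` is injective (cohomologous inflations are cohomologous already over `G/N`, i.e.
via a witness in `A^N`), and the kernel of `Res¹` equals the image of `Inf¹`. -/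
theorem inflation_restriction_exact {G A : Type*}
    [Group G] [TopologicalSpace G] [IsTopologicalGroup G]
    [Group A] [TopologicalSpace A] [IsTopologicalGroup A]
    [MulDistribMulAction G A] [ContinuousSMul G A]
    (N : Subgroup G) [N.Normal] :
    -- injectivity of Inf¹
    (∀ ᾱ β' : G ⧸ N → A, IsQuotDeriv N ᾱ → IsQuotDeriv N β' →
      Cohom (fun g : G => ᾱ (g : G ⧸ N)) (fun g : G => β' (g : G ⧸ N)) →
      ∃ a : A, (∀ n ∈ N, n • a = a) ∧
        ∀ g : G, β' ((g : G ⧸ N)) = a⁻¹ * ᾱ ((g : G ⧸ N)) * g • a) ∧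
    -- ker Res¹ = Im Inf¹
    (∀ α : G → A, IsContDeriv α →
      ((∃ a : A, ∀ n ∈ N, α n = a⁻¹ * n • a) ↔
        ∃ ᾱ : G ⧸ N → A, IsQuotDeriv N ᾱ ∧ Cohom (fun g : G => ᾱ (g : G ⧸ N)) α)) := by
  constructor
  · rintro ᾱ β' hᾱ hβ' ⟨a, ha⟩
    refine ⟨a, fun n hn => ?_, ha⟩
    have hn1 : ((n : G) : G ⧸ N) = ((1 : G) : G ⧸ N) := by
      simpa using (QuotientGroup.eq_one_iff n).mpr hn
    have h := ha n
    simp only [hn1, quot_deriv_one N hᾱ, quot_deriv_one N hβ'] at h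
    have h2 : a * 1 = a * (a⁻¹ * 1 * n • a) := by rw [← h]
    simpa [mul_assoc] using h2.symm
  · rintro α ⟨hαc, hαd⟩
    constructor
    · rintro ⟨a, ha⟩
      set β : G → A := fun g => a * α g * g • a⁻¹ with hβ
      have hβd : ∀ g h : G, β (g * h) = β g * g • β h := by
        intro g h
        simp only [hβ, hαd, smul_mul', mul_smul, smul_inv']
        group
      have hβN : ∀ n ∈ N, β n = 1 := by
        intro n hn
        simp only [hβ, ha n hn, smul_inv']
        group
      have hwd : ∀ g h : G, @Setoid.r G (QuotientGroup.leftRel N) g h → β g = β h := by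
        intro g h hgh
        have hmem : g⁻¹ * h ∈ N := (QuotientGroup.leftRel_apply).mp hgh
        have h1 : β (g * (g⁻¹ * h)) = β g * g • β (g⁻¹ * h) := hβd g (g⁻¹ * h)
        rw [hβN _ hmem] at h1
        simpa [mul_assoc] using h1.symm
      refine ⟨Quotient.lift β hwd, ⟨?_, ?_, ?_⟩, ⟨a, ?_⟩⟩
      · exact Continuous.quotient_lift
          ((continuous_const.mul hαc).mul (continuous_id.smul continuous_const)) hwd
      · intro g h
        exact hβd g h
      · intro q n hn
        induction q using Quotient.inductionOn with
        | h g =>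
          show n • β g = β g
          have h1 : β (n * g) = β n * n • β g := hβd n g
          rw [hβN n hn, one_mul] at h1
          have hmem : (n * g)⁻¹ * g ∈ N := by
            have := Subgroup.Normal.conj_mem ‹N.Normal› n⁻¹ (inv_mem hn) g⁻¹
            simpa [mul_assoc, mul_inv_rev] using this
          have h2 : β (n * g) = β g := hwd _ _ (QuotientGroup.leftRel_apply.mpr hmem)
          rw [← h1, h2]
      · intro g
        show α g = a⁻¹ * β g * g • a
        simp only [hβ, smul_inv']
        group
    · rintro ⟨ᾱ, hᾱ, a, ha⟩
      refine ⟨a, fun n hn => ?_⟩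
      have hn1 : ((n : G) : G ⧸ N) = ((1 : G) : G ⧸ N) := by
        simpa using (QuotientGroup.eq_one_iff n).mpr hn
      have h := ha n
      simp only [hn1, quot_deriv_one N hᾱ] at h
      simpa [mul_assoc] using h
end
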